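/- (Correctness of the incremental algorithm IS.) Let 𝒟 = {𝒞₁,…,𝒞_m} be a family of coverings of the finite universe U = {x₁,…,xₙ}, let 𝒟⁺ = {𝒞₁,…,𝒞_m,𝒞_{m+1}}, let 𝒞 = 𝒞₁ ∪ ⋯ ∪ 𝒞_{m+1} be the covering consisting of all blocks of all members of 𝒟⁺, and set G = Γ(𝒟) ∨ Γ({𝒞_{m+1}}). Then for every X ⊆ U and every i: the i-th entry of the Boolean product G • χ_X equals 1 if and only if x_i ∈ SH_𝒞(X), and the i-th entry of G ⊙ χ_X equals 1 if and only if x_i ∈ SL_𝒞(X). -/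

import Mathlib

/-- Boolean product of Boolean matrices: `(A • B) i j = ⋁ k, A i k ∧ B k j`. -/
def bDot {α β γ : Type*} [Fintype β] (A : α → β → Bool) (B : β → γ → Bool) :
    α → γ → Bool := fun i j => decide (∃ k, A i k = true ∧ B k j = true)

/-- The `⊙` product of Boolean matrices: `(A ⊙ B) i j = 1` iff `A i k ≤ B k j` for all `k`. -/
def oDot {α β γ : Type*} [Fintype β] (A : α → β → Bool) (B : β → γ → Bool) :
    α → γ → Bool := fun i j => decide (∀ k, A i k ≤ B k j)

/-- Matrix representation of a family of subsets of `Fin n` indexed by `ι`. -/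
def Mrep {n : ℕ} {ι : Type*} (C : ι → Finset (Fin n)) : Fin n → ι → Bool :=
  fun i j => decide (i ∈ C j)

/-- Type-1 characteristic matrix `Γ(𝒞) = M_𝒞 • M_𝒞ᵀ`. -/
def Gamma {n : ℕ} {ι : Type*} [Fintype ι] (C : ι → Finset (Fin n)) :
    Fin n → Fin n → Bool :=
  bDot (Mrep C) (fun k j => Mrep C j k)

/-- Type-2 characteristic matrix `Π(𝒞) = M_𝒞 ⊙ M_𝒞ᵀ`. -/
def Pi2 {n : ℕ} {ι : Type*} [Fintype ι] (C : ι → Finset (Fin n)) :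
    Fin n → Fin n → Bool :=
  oDot (Mrep C) (fun k j => Mrep C j k)

/-- An indexed family of subsets of `Fin n` is a covering: all blocks nonempty
and they cover the universe. -/
def IsCovering {n : ℕ} {ι : Type*} (C : ι → Finset (Fin n)) : Prop :=
  (∀ k, (C k).Nonempty) ∧ ∀ x : Fin n, ∃ k, x ∈ C k

/-- Second upper approximation of `X` w.r.t. the covering consisting of the
blocks of an indexed family: `SH_𝒞(X) = ⋃ {C ∈ 𝒞 : C ∩ X ≠ ∅}`. -/
def SHfam {n : ℕ} {ι : Type*} (C : ι → Finset (Fin n)) (X : Finset (Fin n)) :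
    Set (Fin n) :=
  ⋃ (k) (_ : ((C k : Set (Fin n)) ∩ (X : Set (Fin n))).Nonempty), (C k : Set (Fin n))

/-- Second lower approximation: `SL_𝒞(X) = (SH_𝒞(Xᶜ))ᶜ`. -/
def SLfam {n : ℕ} {ι : Type*} (C : ι → Finset (Fin n)) (X : Finset (Fin n)) :
    Set (Fin n) :=
  (SHfam C Xᶜ)ᶜ

/-- Characteristic (column) vector of `X`. -/
def chi {n : ℕ} (X : Finset (Fin n)) : Fin n → Unit → Bool :=
  fun i _ => decide (i ∈ X)

/-- Correctness of the incremental algorithm IS: with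
`G = Γ(𝒟) ∨ Γ({𝒞_{m+1}})`, the entries of `G • χ_X` (resp. `G ⊙ χ_X`) are the
characteristic function of `SH_𝒞(X)` (resp. `SL_𝒞(X)`), where 𝒞 consists of
all blocks of all coverings of 𝒟⁺. -/
theorem is_algorithm_correct {n m : ℕ} (c : Fin m → ℕ) (c' : ℕ)
    (D : (t : Fin m) → Fin (c t) → Finset (Fin n))
    (C' : Fin c' → Finset (Fin n))
    (hD : ∀ t, IsCovering (D t)) (hC' : IsCovering C') :
    ∀ (X : Finset (Fin n)) (i : Fin n),
      (bDot (fun a b : Fin n =>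
            Gamma (fun q : Σ t : Fin m, Fin (c t) => D q.1 q.2) a b || Gamma C' a b)
          (chi X) i () = true ↔
        i ∈ SHfam (Sum.elim (fun q : Σ t : Fin m, Fin (c t) => D q.1 q.2) C') X) ∧
      (oDot (fun a b : Fin n =>
            Gamma (fun q : Σ t : Fin m, Fin (c t) => D q.1 q.2) a b || Gamma C' a b)
          (chi X) i () = true ↔
        i ∈ SLfam (Sum.elim (fun q : Σ t : Fin m, Fin (c t) => D q.1 q.2) C') X) := by
  intro X i
  set F := Sum.elim (fun q : Σ t : Fin m, Fin (c t) => D q.1 q.2) C' with hF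
  have hG : ∀ j : Fin n,
      (Gamma (fun q : Σ t : Fin m, Fin (c t) => D q.1 q.2) i j || Gamma C' i j) = true ↔
      ∃ k, i ∈ F k ∧ j ∈ F k := by
    intro j
    simp only [Gamma, bDot, Mrep, Bool.or_eq_true, decide_eq_true_eq]
    constructor
    · rintro (⟨k, hk1, hk2⟩ | ⟨k, hk1, hk2⟩)
      · exact ⟨Sum.inl k, hk1, hk2⟩
      · exact ⟨Sum.inr k, hk1, hk2⟩
    · rintro ⟨(k | k), hk1, hk2⟩
      · exact Or.inl ⟨k, hk1, hk2⟩
      · exact Or.inr ⟨k, hk1, hk2⟩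
  constructor
  · simp only [bDot, chi, decide_eq_true_eq, SHfam, Set.mem_iUnion]
    constructor
    · rintro ⟨j, hj, hjX⟩
      obtain ⟨k, hik, hjk⟩ := (hG j).1 hj
      exact ⟨k, ⟨j, hjk, hjX⟩, hik⟩
    · rintro ⟨k, ⟨j, hjk, hjX⟩, hik⟩
      exact ⟨j, (hG j).2 ⟨k, hik, hjk⟩, hjX⟩
  · simp only [oDot, chi, decide_eq_true_eq, SLfam, SHfam, Set.mem_compl_iff,
      Set.mem_iUnion, not_exists]
    refine (@decide_eq_true_iff _ Fintype.decidableForallFintype).trans ?_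
    constructor
    · intro h k hne hik
      obtain ⟨j, hjk, hjXc⟩ := hne
      have := h j ((hG j).2 ⟨k, hik, hjk⟩)
      simp only [Finset.coe_compl, Set.mem_compl_iff, Finset.mem_coe] at hjXc
      exact hjXc (of_decide_eq_true this)
    · intro h j hj
      obtain ⟨k, hik, hjk⟩ := (hG j).1 hj
      by_contra hjX
      refine h k ⟨j, ?_⟩ hik
      simp only [Finset.coe_compl, Set.mem_inter_iff, Set.mem_compl_iff, Finset.mem_coe]
      exact ⟨hjk, by simpa using hjX⟩
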